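/- Let m ≥ 2 and n ≥ 0 be integers. For all real x and y: ∫_0^∞ e^{-t} H̃_n^{(m)}(xt, y) dt = H_n^{(m)}(x,y)/n!. -/

import Mathlib

open MeasureTheory Set

/-- The higher-order Hermite (Gould–Hopper) polynomials (real arguments):
`H_n^(m)(u,v) = n! ∑_{k=0}^{⌊n/m⌋} u^(n-mk) v^k / ((n-mk)! k!)`. -/
noncomputable def gouldHopper (m n : ℕ) (u v : ℝ) : ℝ :=
  (n.factorial : ℝ) * ∑ k ∈ Finset.range (n / m + 1),
    u ^ (n - m * k) * v ^ k / (((n - m * k).factorial : ℝ) * (k.factorial : ℝ))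

/-- The hybrid polynomials
`H̃_n^(m)(x,y) = ∑_{k=0}^{⌊n/m⌋} x^(n-mk) y^k / (k! ((n-mk)!)²)`. -/
noncomputable def hybridHermite (m n : ℕ) (x y : ℝ) : ℝ :=
  ∑ k ∈ Finset.range (n / m + 1),
    x ^ (n - m * k) * y ^ k / ((k.factorial : ℝ) * ((n - m * k).factorial : ℝ) ^ 2)

lemma exp_neg_mul_pow_integrableOn (j : ℕ) :
    IntegrableOn (fun t : ℝ => Real.exp (-t) * t ^ j) (Ioi 0) := by
  have h := Real.GammaIntegral_convergent (show (0:ℝ) < (j : ℝ) + 1 by positivity)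
  refine h.congr_fun (fun t ht => ?_) measurableSet_Ioi
  simp only [add_sub_cancel_right, Real.rpow_natCast]

lemma integral_exp_neg_mul_pow (j : ℕ) :
    ∫ t in Ioi 0, Real.exp (-t) * t ^ j = (j.factorial : ℝ) := by
  rw [← Real.Gamma_nat_eq_factorial,
    Real.Gamma_eq_integral (show (0:ℝ) < (j : ℝ) + 1 by positivity)]
  refine setIntegral_congr_fun measurableSet_Ioi fun t ht => ?_
  rw [add_sub_cancel_right, Real.rpow_natCast]

/-- For `m ≥ 2`, `n ≥ 0` and all real `x, y`, the Borel transform (in the first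
variable) of the hybrid polynomial recovers the Gould–Hopper polynomial:
`∫_0^∞ e^{-t} H̃_n^(m)(xt, y) dt = H_n^(m)(x,y)/n!`. -/
theorem borel_transform_hybridHermite_fst (m n : ℕ) (hm : 2 ≤ m) (x y : ℝ) :
    ∫ t : ℝ in Ioi 0, Real.exp (-t) * hybridHermite m n (x * t) y
      = gouldHopper m n x y / (n.factorial : ℝ) := by
  have hn : (n.factorial : ℝ) ≠ 0 := Nat.cast_ne_zero.mpr n.factorial_ne_zero
  simp only [hybridHermite, Finset.mul_sum]
  have hcongr : ∀ t : ℝ, ∀ k ∈ Finset.range (n / m + 1),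
      Real.exp (-t) * ((x * t) ^ (n - m * k) * y ^ k /
        ((k.factorial : ℝ) * ((n - m * k).factorial : ℝ) ^ 2))
      = (x ^ (n - m * k) * y ^ k / ((k.factorial : ℝ) * ((n - m * k).factorial : ℝ) ^ 2))
        * (Real.exp (-t) * t ^ (n - m * k)) := fun t k _ => by
    rw [mul_pow]; ring
  calc ∫ t : ℝ in Ioi 0, ∑ k ∈ Finset.range (n / m + 1),
        Real.exp (-t) * ((x * t) ^ (n - m * k) * y ^ k /
          ((k.factorial : ℝ) * ((n - m * k).factorial : ℝ) ^ 2))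
      = ∫ t : ℝ in Ioi 0, ∑ k ∈ Finset.range (n / m + 1),
        (x ^ (n - m * k) * y ^ k / ((k.factorial : ℝ) * ((n - m * k).factorial : ℝ) ^ 2))
          * (Real.exp (-t) * t ^ (n - m * k)) := by
        refine setIntegral_congr_fun measurableSet_Ioi fun t _ => ?_
        exact Finset.sum_congr rfl (hcongr t)
    _ = ∑ k ∈ Finset.range (n / m + 1),
        ∫ t : ℝ in Ioi 0,
        (x ^ (n - m * k) * y ^ k / ((k.factorial : ℝ) * ((n - m * k).factorial : ℝ) ^ 2))
          * (Real.exp (-t) * t ^ (n - m * k)) := by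
        refine integral_finset_sum _ fun k _ => ?_
        exact (exp_neg_mul_pow_integrableOn (n - m * k)).const_mul _
    _ = gouldHopper m n x y / (n.factorial : ℝ) := by
        rw [gouldHopper, mul_comm, mul_div_assoc, div_self hn, mul_one]
        refine Finset.sum_congr rfl fun k _ => ?_
        rw [integral_const_mul, integral_exp_neg_mul_pow]
        have hf : ((n - m * k).factorial : ℝ) ≠ 0 :=
          Nat.cast_ne_zero.mpr (n - m * k).factorial_ne_zero
        have hk : ((k.factorial : ℝ)) ≠ 0 := Nat.cast_ne_zero.mpr k.factorial_ne_zero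
        field_simp
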